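/- Conversely, if there exist a factorization H_B = H_L ⊗ H_R, a pure state |φ⟩ ∈ H_A ⊗ H_L, and a density matrix ρ_R on H_R such that (1_A ⊗ Φ)(|u_ρ⟩⟨u_ρ|) = |φ⟩⟨φ|_{AL} ⊗ ρ_R, then I_c(ρ,Φ) = S(ρ). -/

import Mathlib

open Matrix Kronecker BigOperators
open scoped ComplexOrder

noncomputable section

/-- Partial trace over the second (right) tensor factor. -/
def ptraceRight {m n : Type*} [Fintype n]
    (ρ : Matrix (m × n) (m × n) ℂ) : Matrix m m ℂ :=
  fun i j => ∑ k : n, ρ (i, k) (j, k)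

/-- Partial trace over the first (left) tensor factor. -/
def ptraceLeft {m n : Type*} [Fintype m]
    (ρ : Matrix (m × n) (m × n) ℂ) : Matrix n n ℂ :=
  fun i j => ∑ k : m, ρ (k, i) (k, j)

/-- Partial trace of a tripartite state over the last factor. -/
def trC {a b c : Type*} [Fintype c]
    (ρ : Matrix (a × b × c) (a × b × c) ℂ) : Matrix (a × b) (a × b) ℂ :=
  fun i j => ∑ k : c, ρ (i.1, i.2, k) (j.1, j.2, k)

/-- Partial trace of a tripartite state over the first and last factors. -/
def trAC {a b c : Type*} [Fintype a] [Fintype c]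
    (ρ : Matrix (a × b × c) (a × b × c) ℂ) : Matrix b b ℂ :=
  fun i j => ∑ x : a, ∑ k : c, ρ (x, i, k) (x, j, k)

/-- A density matrix: positive semidefinite with unit trace. -/
def IsDensity {n : Type*} [Fintype n] (ρ : Matrix n n ℂ) : Prop :=
  ρ.PosSemidef ∧ ρ.trace = 1

/-- Von Neumann entropy `S(ρ) = -Tr (ρ log ρ)`, computed from the eigenvalues. -/
def vNEntropy {n : Type*} [Fintype n] [DecidableEq n] (ρ : Matrix n n ℂ) : ℝ :=
  if h : ρ.IsHermitian then -∑ i, (h.eigenvalues i * Real.log (h.eigenvalues i)) else 0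

/-- `Φ ⊗ 1` : a map on the first tensor factor extended by the identity. -/
def tensorId {h h' k : Type*}
    (Φ : Matrix h h ℂ → Matrix h' h' ℂ)
    (ρ : Matrix (h × k) (h × k) ℂ) : Matrix (h' × k) (h' × k) ℂ :=
  fun i j => Φ (fun x y => ρ (x, i.2) (y, j.2)) i.1 j.1

/-- `1 ⊗ Φ` : a map on the second tensor factor extended by the identity. -/
def idTensor {h h' k : Type*}
    (Φ : Matrix h h ℂ → Matrix h' h' ℂ)
    (ρ : Matrix (k × h) (k × h) ℂ) : Matrix (k × h') (k × h') ℂ :=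
  fun i j => Φ (fun x y => ρ (i.1, x) (j.1, y)) i.2 j.2

/-- A quantum channel: linear, trace preserving and completely positive map. -/
structure QChannel (m n : Type*) [Fintype m] [Fintype n] where
  map : Matrix m m ℂ → Matrix n n ℂ
  linear : ∀ (a b : ℂ) (ρ σ : Matrix m m ℂ), map (a • ρ + b • σ) = a • map ρ + b • map σ
  trace_preserving : ∀ ρ : Matrix m m ℂ, (map ρ).trace = ρ.trace
  completely_positive : ∀ (d : ℕ) (ρ : Matrix (m × Fin d) (m × Fin d) ℂ),
    ρ.PosSemidef → (tensorId map ρ).PosSemidef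

/-- Pure state projector `|v⟩⟨v|`. -/
def proj {n : Type*} (v : n → ℂ) : Matrix n n ℂ := Matrix.vecMulVec v (star v)

/-- Unit vector. -/
def IsUnit' {n : Type*} [Fintype n] (v : n → ℂ) : Prop := ∑ i, Complex.normSq (v i) = 1


section CharpolyAux
open Polynomial

variable {n m : Type*} [Fintype n] [DecidableEq n] [Fintype m] [DecidableEq m]

lemma charpoly_conj {R : Type*} [CommRing R] (P A Q : Matrix n n R) (hPQ : P * Q = 1) :
    (P * A * Q).charpoly = A.charpoly := by
  have hmapPQ : P.map (C : R →+* R[X]) * Q.map C = 1 := by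
    rw [← Matrix.map_mul, hPQ, Matrix.map_one _ (map_zero _) (map_one _)]
  unfold Matrix.charpoly
  have hcm : charmatrix (P * A * Q) = P.map C * charmatrix A * Q.map C := by
    unfold charmatrix
    rw [Matrix.mul_sub, Matrix.sub_mul]
    congr 1
    · rw [scalar_apply, ← smul_one_eq_diagonal, Matrix.mul_smul, Matrix.smul_mul, mul_one, ← Matrix.smul_mul,
        smul_one_eq_diagonal, ← smul_one_eq_diagonal, Matrix.smul_mul, hmapPQ, smul_one_eq_diagonal, ← scalar_apply]
    · show (RingHom.mapMatrix (C : R →+* R[X])) (P * A * Q) = _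
      rw [_root_.map_mul, _root_.map_mul]; rfl
  rw [hcm, det_mul, det_mul]
  have h1 : (P.map (C : R →+* R[X])).det * (Q.map C).det = 1 := by
    rw [← det_mul, hmapPQ, det_one]
  calc (P.map (C : R →+* R[X])).det * (charmatrix A).det * (Q.map C).det
      = (P.map (C : R →+* R[X])).det * (Q.map C).det * (charmatrix A).det := by ring
    _ = (charmatrix A).det := by rw [h1, one_mul]

lemma charpoly_diag {R : Type*} [CommRing R] (d : n → R) :
    (diagonal d).charpoly = ∏ i, (X - C (d i)) := by
  unfold Matrix.charpoly
  have : charmatrix (diagonal d) = diagonal (fun i => X - C (d i)) := by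
    ext i j
    by_cases h : i = j
    · subst h; simp
    · simp [h, charmatrix_apply_ne _ _ _ h]
  rw [this, det_diagonal]

lemma charpoly_of_hermitian (A : Matrix n n ℂ) (hA : A.IsHermitian) :
    A.charpoly = ∏ i, (X - C ((hA.eigenvalues i : ℝ) : ℂ)) := by
  conv_lhs => rw [hA.spectral_theorem]
  rw [Unitary.conjStarAlgAut_apply]
  rw [charpoly_conj _ _ _ (Matrix.mem_unitaryGroup_iff.mp (hA.eigenvectorUnitary).2),
    charpoly_diag]
  rfl

lemma eig_multiset (A : Matrix n n ℂ) (hA : A.IsHermitian) :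
    A.charpoly.roots = Finset.univ.val.map (fun i => ((hA.eigenvalues i : ℝ) : ℂ)) := by
  rw [charpoly_of_hermitian A hA]
  have : ∏ i : n, (X - C ((hA.eigenvalues i : ℝ) : ℂ)) =
      ((Finset.univ.val.map fun i => ((hA.eigenvalues i : ℝ) : ℂ)).map fun a => X - C a).prod := by
    rw [Multiset.map_map]; rfl
  rw [this, Polynomial.roots_multiset_prod_X_sub_C]

lemma sum_f_eigs_pad (f : ℝ → ℝ) (hf0 : f 0 = 0) (A : Matrix n n ℂ) (B : Matrix m m ℂ)
    (hA : A.IsHermitian) (hB : B.IsHermitian) (k l : ℕ)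
    (h : A.charpoly * X ^ k = B.charpoly * X ^ l) :
    ∑ i, f (hA.eigenvalues i) = ∑ i, f (hB.eigenvalues i) := by
  have hroots : A.charpoly.roots + (Multiset.replicate k (0:ℂ)) =
      B.charpoly.roots + (Multiset.replicate l (0:ℂ)) := by
    have hA0 : A.charpoly ≠ 0 := A.charpoly_monic.ne_zero
    have hB0 : B.charpoly ≠ 0 := B.charpoly_monic.ne_zero
    have := congrArg Polynomial.roots h
    rw [Polynomial.roots_mul (mul_ne_zero hA0 (pow_ne_zero _ X_ne_zero)),
      Polynomial.roots_mul (mul_ne_zero hB0 (pow_ne_zero _ X_ne_zero))] at this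
    simpa only [Polynomial.roots_pow, Polynomial.roots_X, Multiset.nsmul_singleton] using this
  have hmap := congrArg (fun s : Multiset ℂ => (s.map fun z => f z.re).sum) hroots
  simp only [Multiset.map_add, Multiset.sum_add, Multiset.map_replicate, Complex.zero_re, hf0,
    Multiset.sum_replicate, smul_zero, add_zero] at hmap
  rw [eig_multiset A hA, eig_multiset B hB, Multiset.map_map, Multiset.map_map] at hmap
  simpa using hmap

lemma det_X_smul_one {R : Type*} [CommRing R] :
    ((X : R[X]) • (1 : Matrix n n R[X])).det = X ^ (Fintype.card n) := by
  rw [smul_one_eq_diagonal, det_diagonal]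
  simp [Finset.prod_const, Finset.card_univ]

lemma charpoly_eq_det (A : Matrix n n ℂ) :
    A.charpoly = ((X : ℂ[X]) • (1 : Matrix n n ℂ[X]) - A.map C).det := by
  unfold Matrix.charpoly charmatrix
  rw [scalar_apply, smul_one_eq_diagonal]
  rfl

/-- `charpoly (A * B) * X ^ |b| = charpoly (B * A) * X ^ |a|` for rectangular `A, B`. -/
lemma charpoly_mul_comm_rect (A : Matrix n m ℂ) (B : Matrix m n ℂ) :
    (A * B).charpoly * X ^ (Fintype.card m) = (B * A).charpoly * X ^ (Fintype.card n) := by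
  set A' := A.map (C : ℂ →+* ℂ[X]) with hA'
  set B' := B.map (C : ℂ →+* ℂ[X]) with hB'
  have key : fromBlocks (1 : Matrix n n ℂ[X]) 0 B' 1 *
        fromBlocks ((X : ℂ[X]) • 1) A' 0 ((X : ℂ[X]) • 1 - B' * A') =
      fromBlocks ((X : ℂ[X]) • 1 - A' * B') A' 0 ((X : ℂ[X]) • 1) *
        fromBlocks (1 : Matrix n n ℂ[X]) 0 B' 1 := by
    rw [fromBlocks_multiply, fromBlocks_multiply]
    simp [Matrix.sub_mul, Matrix.mul_sub, Matrix.smul_mul, Matrix.mul_smul, sub_add_cancel]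
  have hdet := congrArg Matrix.det key
  simp only [det_mul, det_fromBlocks_zero₁₂, det_fromBlocks_zero₂₁, det_one, one_mul,
    mul_one, det_X_smul_one] at hdet
  rw [charpoly_eq_det, charpoly_eq_det]
  have hAB : (A * B).map (C : ℂ →+* ℂ[X]) = A' * B' := Matrix.map_mul
  have hBA : (B * A).map (C : ℂ →+* ℂ[X]) = B' * A' := Matrix.map_mul
  rw [hAB, hBA]
  rw [mul_comm ((X:ℂ[X]) ^ Fintype.card n)] at hdet; exact hdet.symm

end CharpolyAux

section EntAux
open Polynomial

lemma sum_eig_eq_trace {p : Type*} [Fintype p] [DecidableEq p] (A : Matrix p p ℂ)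
    (hA : A.IsHermitian) : ((∑ i, hA.eigenvalues i : ℝ) : ℂ) = A.trace := by
  have h := Matrix.trace_eq_sum_roots_charpoly (A := A)
  rw [eig_multiset A hA] at h
  rw [h, ← Finset.sum_eq_multiset_sum]
  push_cast
  rfl

lemma mul_log_helper {x y : ℝ} (hx : 0 ≤ x) (hy : 0 ≤ y) :
    (x * y) * Real.log (x * y) = y * (x * Real.log x) + x * (y * Real.log y) := by
  rcases eq_or_lt_of_le hx with h | hx
  · simp [← h]
  rcases eq_or_lt_of_le hy with h | hy
  · simp [← h]
  rw [Real.log_mul hx.ne' hy.ne']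
  ring

open Polynomial in
lemma sum_f_eigs {p : Type*} [Fintype p] [DecidableEq p] (f : ℝ → ℝ) (A : Matrix p p ℂ)
    (hA : A.IsHermitian) {ι : Type*} [Fintype ι] (c : ι → ℝ)
    (h : A.charpoly = ∏ i, (X - C ((c i : ℝ) : ℂ))) :
    ∑ i, f (hA.eigenvalues i) = ∑ i, f (c i) := by
  have h2 : A.charpoly.roots = Finset.univ.val.map (fun i : ι => ((c i : ℝ) : ℂ)) := by
    rw [h]
    have e : ∏ i : ι, (X - C ((c i : ℝ) : ℂ)) =
        ((Finset.univ.val.map fun i : ι => ((c i : ℝ) : ℂ)).map fun a => X - C a).prod := by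
      rw [Multiset.map_map]; rfl
    rw [e, Polynomial.roots_multiset_prod_X_sub_C]
  rw [eig_multiset A hA] at h2
  have h3 := congrArg (fun s : Multiset ℂ => (s.map fun z => f z.re).sum) h2
  simp only [Multiset.map_map] at h3
  have e1 : ((fun z : ℂ => f z.re) ∘ fun i => ((hA.eigenvalues i : ℝ) : ℂ)) =
      fun i => f (hA.eigenvalues i) := by funext i; simp
  have e2 : ((fun z : ℂ => f z.re) ∘ fun i : ι => ((c i : ℝ) : ℂ)) = fun i => f (c i) := by
    funext i; simp
  rw [e1, e2] at h3
  rw [Finset.sum_eq_multiset_sum, Finset.sum_eq_multiset_sum]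
  exact h3

open Polynomial in
lemma vNEntropy_of_charpoly_pad {p q : Type*} [Fintype p] [DecidableEq p] [Fintype q]
    [DecidableEq q] (A : Matrix p p ℂ) (B : Matrix q q ℂ)
    (hA : A.IsHermitian) (hB : B.IsHermitian) (k l : ℕ)
    (h : A.charpoly * X ^ k = B.charpoly * X ^ l) : vNEntropy A = vNEntropy B := by
  rw [vNEntropy, vNEntropy, dif_pos hA, dif_pos hB]
  exact congrArg Neg.neg (sum_f_eigs_pad (fun x => x * Real.log x) (by simp) _ _ hA hB _ _ h)

section EntAux2
open Polynomial

variable {p q : Type*} [Fintype p] [DecidableEq p] [Fintype q] [DecidableEq q]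

lemma charpoly_transpose (A : Matrix p p ℂ) : Aᵀ.charpoly = A.charpoly := by
  unfold Matrix.charpoly
  have h : charmatrix Aᵀ = (charmatrix A)ᵀ := by
    ext i j
    by_cases hij : i = j
    · subst hij; simp
    · simp [charmatrix_apply_ne _ _ _ hij, charmatrix_apply_ne _ _ _ (Ne.symm hij),
        Matrix.transpose_apply]
  rw [h, Matrix.det_transpose]

lemma kron_conjTranspose (A : Matrix p p ℂ) (B : Matrix q q ℂ) :
    (A ⊗ₖ B)ᴴ = Aᴴ ⊗ₖ Bᴴ := by
  ext ⟨i, x⟩ ⟨j, y⟩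
  simp [Matrix.conjTranspose_apply, Matrix.kroneckerMap_apply]

lemma kron_isHermitian {A : Matrix p p ℂ} {B : Matrix q q ℂ}
    (hA : A.IsHermitian) (hB : B.IsHermitian) : (A ⊗ₖ B).IsHermitian := by
  show (A ⊗ₖ B)ᴴ = A ⊗ₖ B
  rw [kron_conjTranspose, hA.eq, hB.eq]

/-- Entropy is invariant under conjugation by a (possibly rectangular) coisometry. -/
lemma vNEntropy_conj (P : Matrix p q ℂ) (A : Matrix q q ℂ) (hP : Pᴴ * P = 1)
    (hA : A.IsHermitian) : vNEntropy (P * A * Pᴴ) = vNEntropy A := by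
  have hH : (P * A * Pᴴ).IsHermitian := Matrix.isHermitian_mul_mul_conjTranspose P hA
  have hc : (P * A * Pᴴ).charpoly * X ^ (Fintype.card q) = A.charpoly * X ^ (Fintype.card p) := by
    have := charpoly_mul_comm_rect P (A * Pᴴ)
    rwa [← Matrix.mul_assoc, Matrix.mul_assoc A Pᴴ P, hP, Matrix.mul_one] at this
  rw [vNEntropy, vNEntropy, dif_pos hH, dif_pos hA]
  exact congrArg Neg.neg
    (sum_f_eigs_pad (fun x => x * Real.log x) (by simp) _ _ hH hA _ _ hc)

lemma vNEntropy_reindex (e : p ≃ q) (A : Matrix p p ℂ) (hA : A.IsHermitian) :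
    vNEntropy (Matrix.reindex e e A) = vNEntropy A := by
  have hH : (Matrix.reindex e e A).IsHermitian := by
    show (Matrix.reindex e e A)ᴴ = Matrix.reindex e e A
    ext i j
    simp [Matrix.conjTranspose_apply, hA.apply]
  rw [vNEntropy, vNEntropy, dif_pos hH, dif_pos hA]
  refine congrArg Neg.neg (sum_f_eigs_pad (fun x => x * Real.log x) (by simp) _ _ hH hA 0 0 ?_)
  rw [Matrix.charpoly_reindex]

lemma vNEntropy_kron (A : Matrix p p ℂ) (B : Matrix q q ℂ)
    (hA : A.PosSemidef) (hB : B.PosSemidef) (hTA : A.trace = 1) (hTB : B.trace = 1) :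
    vNEntropy (A ⊗ₖ B) = vNEntropy A + vNEntropy B := by
  have hHA := hA.1
  have hHB := hB.1
  have hH := kron_isHermitian hHA hHB
  set lam := hHA.eigenvalues
  set mu := hHB.eigenvalues
  -- charpoly of the Kronecker product
  have hcp : (A ⊗ₖ B).charpoly = ∏ ix : p × q, (X - C ((lam ix.1 * mu ix.2 : ℝ) : ℂ)) := by
    have hU := Matrix.mem_unitaryGroup_iff.mp (hHA.eigenvectorUnitary).2
    have hU' := Matrix.mem_unitaryGroup_iff.mp (hHB.eigenvectorUnitary).2
    conv_lhs => rw [hHA.spectral_theorem, hHB.spectral_theorem]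
    rw [Unitary.conjStarAlgAut_apply, Unitary.conjStarAlgAut_apply]
    rw [Matrix.mul_kronecker_mul, Matrix.mul_kronecker_mul]
    rw [charpoly_conj _ _ _ (by rw [← Matrix.mul_kronecker_mul, hU, hU',
      Matrix.one_kronecker_one])]
    rw [Matrix.diagonal_kronecker_diagonal, charpoly_diag]
    congr 1
    ext ix
    have he : (RCLike.ofReal ∘ hHA.eigenvalues) ix.1 * (RCLike.ofReal ∘ hHB.eigenvalues) ix.2 =
        ((lam ix.1 * mu ix.2 : ℝ) : ℂ) := by
      simp only [Function.comp_apply, Complex.ofReal_mul, RCLike.ofReal_mul]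
      norm_cast
    rw [he]
  have hsum := sum_f_eigs (fun x => x * Real.log x) (A ⊗ₖ B) hH
    (fun ix : p × q => lam ix.1 * mu ix.2) hcp
  have hlam1 : ∑ i, lam i = 1 := by
    have := sum_eig_eq_trace A hHA
    rw [hTA] at this
    exact_mod_cast this
  have hmu1 : ∑ i, mu i = 1 := by
    have := sum_eig_eq_trace B hHB
    rw [hTB] at this
    exact_mod_cast this
  rw [vNEntropy, vNEntropy, vNEntropy, dif_pos hH, dif_pos hHA, dif_pos hHB, hsum]
  rw [Fintype.sum_prod_type]
  have hterm : ∀ i x, (lam i * mu x) * Real.log (lam i * mu x) =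
      mu x * (lam i * Real.log (lam i)) + lam i * (mu x * Real.log (mu x)) :=
    fun i x => mul_log_helper (hA.eigenvalues_nonneg i) (hB.eigenvalues_nonneg x)
  simp only [hterm, Finset.sum_add_distrib, ← Finset.mul_sum, ← Finset.sum_mul]
  rw [hmu1, hlam1]
  ring

end EntAux2

section StructAux
open Polynomial

variable {α β : Type*} [Fintype α] [DecidableEq α] [Fintype β] [DecidableEq β]

/-- The coefficient matrix of a bipartite vector. -/
def matOf (u : α × β → ℂ) : Matrix α β ℂ := Matrix.of fun i j => u (i, j)

lemma ptraceRight_proj (u : α × β → ℂ) :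
    ptraceRight (proj u) = matOf u * (matOf u)ᴴ := by
  ext i j
  simp [ptraceRight, proj, Matrix.mul_apply, matOf, Matrix.vecMulVec_apply,
    Matrix.conjTranspose_apply]

lemma ptraceLeft_proj (u : α × β → ℂ) :
    ptraceLeft (proj u) = (matOf u)ᵀ * ((matOf u)ᵀ)ᴴ := by
  ext i j
  simp [ptraceLeft, proj, Matrix.mul_apply, matOf, Matrix.vecMulVec_apply,
    Matrix.conjTranspose_apply]

lemma ptraceRight_proj_posSemidef (u : α × β → ℂ) : (ptraceRight (proj u)).PosSemidef := by
  rw [ptraceRight_proj]; exact Matrix.posSemidef_self_mul_conjTranspose _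

lemma ptraceLeft_proj_posSemidef (u : α × β → ℂ) : (ptraceLeft (proj u)).PosSemidef := by
  rw [ptraceLeft_proj]; exact Matrix.posSemidef_self_mul_conjTranspose _

lemma trace_ptraceLeft (ρ : Matrix (α × β) (α × β) ℂ) :
    (ptraceLeft ρ).trace = ρ.trace := by
  simp only [Matrix.trace, Matrix.diag, ptraceLeft, Fintype.sum_prod_type]
  rw [Finset.sum_comm]

lemma trace_proj {n : Type*} [Fintype n] (v : n → ℂ) (hv : IsUnit' v) :
    (proj v).trace = 1 := by
  rw [Matrix.trace]
  have : ∀ i, (proj v).diag i = ((Complex.normSq (v i) : ℝ) : ℂ) := by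
    intro i
    simp [proj, Matrix.diag, Matrix.vecMulVec_apply, Complex.mul_conj]
  simp only [this]
  rw [← Complex.ofReal_sum, hv, Complex.ofReal_one]

/-- The two marginals of a pure state have equal entropy (Schmidt decomposition). -/
lemma vNEntropy_marginals (u : α × β → ℂ) :
    vNEntropy (ptraceLeft (proj u)) = vNEntropy (ptraceRight (proj u)) := by
  set M := matOf u with hM
  have hL : (ptraceLeft (proj u)).IsHermitian := (ptraceLeft_proj_posSemidef u).1
  have hR : (ptraceRight (proj u)).IsHermitian := (ptraceRight_proj_posSemidef u).1
  refine vNEntropy_of_charpoly_pad _ _ hL hR (Fintype.card α) (Fintype.card β) ?_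
  rw [ptraceLeft_proj, ptraceRight_proj, ← hM]
  have h1 := charpoly_mul_comm_rect (Mᵀ) (Mᵀᴴ)
  have h2 : Mᵀᴴ * Mᵀ = (M * Mᴴ)ᵀ := by
    ext i j
    simp [Matrix.mul_apply, Matrix.conjTranspose_apply, Matrix.transpose_apply, mul_comm]
  rw [h2, _root_.charpoly_transpose] at h1
  exact h1

lemma vNEntropy_one_unit : vNEntropy (1 : Matrix Unit Unit ℂ) = 0 := by
  have hH : (1 : Matrix Unit Unit ℂ).IsHermitian := Matrix.isHermitian_one
  rw [vNEntropy, dif_pos hH]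
  have h1 : (1 : Matrix Unit Unit ℂ).charpoly = ∏ _i : Unit, (X - C ((1 : ℝ) : ℂ)) := by
    rw [← Matrix.diagonal_one, charpoly_diag]
    norm_num
  rw [sum_f_eigs (fun x => x * Real.log x) _ hH (fun _ : Unit => (1 : ℝ)) h1]
  simp

lemma vNEntropy_proj {n : Type*} [Fintype n] [DecidableEq n] (v : n → ℂ) (hv : IsUnit' v) :
    vNEntropy (proj v) = 0 := by
  have hpr : proj v = Matrix.replicateCol Unit v * (Matrix.replicateCol Unit v)ᴴ := by
    rw [Matrix.conjTranspose_replicateCol, proj, Matrix.vecMulVec_eq Unit]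
  have hrc : (Matrix.replicateCol Unit v)ᴴ * Matrix.replicateCol Unit v = (1 : Matrix Unit Unit ℂ) := by
    ext i j
    rw [Matrix.conjTranspose_replicateCol]
    simp only [Matrix.mul_apply, Matrix.replicateRow_apply, Matrix.replicateCol_apply, Pi.star_apply]
    have : ∀ k, star (v k) * v k = ((Complex.normSq (v k) : ℝ) : ℂ) := by
      intro k; rw [mul_comm]; exact Complex.mul_conj (v k)
    simp only [this]
    rw [← Complex.ofReal_sum, hv, Complex.ofReal_one]
    simp [Matrix.one_apply]
  have hH : (proj v).IsHermitian := by
    rw [hpr]; exact (Matrix.posSemidef_self_mul_conjTranspose _).1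
  have hpad := charpoly_mul_comm_rect (Matrix.replicateCol Unit v) ((Matrix.replicateCol Unit v)ᴴ)
  rw [hrc, ← hpr] at hpad
  rw [vNEntropy_of_charpoly_pad (proj v) (1 : Matrix Unit Unit ℂ) hH Matrix.isHermitian_one
    _ _ hpad, vNEntropy_one_unit]

end StructAux

section StructAux2
set_option linter.unusedSectionVars false

variable {α β γ : Type*} [Fintype α] [DecidableEq α] [Fintype β] [DecidableEq β]
  [Fintype γ] [DecidableEq γ]

/-- The channel map as an additive monoid hom. -/
def QChannel.addHom (Φ : QChannel β β) : Matrix β β ℂ →+ Matrix β β ℂ :=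
  AddMonoidHom.mk' Φ.map (by
    intro ρ σ
    have := Φ.linear 1 1 ρ σ
    simpa using this)

lemma QChannel.addHom_apply (Φ : QChannel β β) (ρ : Matrix β β ℂ) : Φ.addHom ρ = Φ.map ρ := rfl

lemma ptraceLeft_idTensor (Φ : QChannel β β) (ρ : Matrix (α × β) (α × β) ℂ) :
    ptraceLeft (idTensor Φ.map ρ) = Φ.map (ptraceLeft ρ) := by
  have h : ptraceLeft ρ = ∑ k : α, Matrix.of (fun s t => ρ (k, s) (k, t)) := by
    ext s t
    simp [ptraceLeft, Matrix.sum_apply]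
  rw [h, ← QChannel.addHom_apply, map_sum]
  ext x y
  simp only [ptraceLeft, idTensor, QChannel.addHom_apply, Matrix.sum_apply]
  rfl

lemma ptraceRight_idTensor (Φ : QChannel β β) (ρ : Matrix (α × β) (α × β) ℂ) :
    ptraceRight (idTensor Φ.map ρ) = ptraceRight ρ := by
  ext i j
  have h := Φ.trace_preserving (Matrix.of (fun s t => ρ (i, s) (j, t)))
  simp only [Matrix.trace, Matrix.diag] at h
  simp only [ptraceRight, idTensor]; exact h

lemma conjTranspose_kron {p q r s : Type*} (A : Matrix p q ℂ) (B : Matrix r s ℂ) :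
    (A ⊗ₖ B)ᴴ = Aᴴ ⊗ₖ Bᴴ := by
  ext ⟨i, x⟩ ⟨j, y⟩
  simp [Matrix.conjTranspose_apply, Matrix.kroneckerMap_apply]

lemma kron_conj_apply (V : Matrix γ β ℂ) (σ : Matrix (α × β) (α × β) ℂ)
    (k k' : α) (x y : γ) :
    ((((1 : Matrix α α ℂ) ⊗ₖ V) * σ * ((1 : Matrix α α ℂ) ⊗ₖ V)ᴴ) (k, x) (k', y))
      = ∑ s, ∑ t, V x s * σ (k, s) (k', t) * star (V y t) := by
  have h1 : ∀ j, ((((1 : Matrix α α ℂ) ⊗ₖ V) * σ) (k, x)) j = ∑ s, V x s * σ (k, s) j := by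
    intro j
    rw [Matrix.mul_apply, Fintype.sum_prod_type]
    simp [Matrix.kroneckerMap_apply, Matrix.one_apply, ite_mul, Finset.sum_ite_eq]
  have h2 : ∀ (k₂ : α) (t : β), ((1 : Matrix α α ℂ) ⊗ₖ V)ᴴ (k₂, t) (k', y) =
      (if k₂ = k' then star (V y t) else 0) := by
    intro k₂ t
    rw [conjTranspose_kron]
    simp [Matrix.kroneckerMap_apply, Matrix.one_apply, Matrix.conjTranspose_apply, ite_mul]
  rw [Matrix.mul_apply, Fintype.sum_prod_type]
  simp only [h1, h2, mul_ite, mul_zero]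
  rw [Finset.sum_comm]
  simp only [Finset.sum_ite_eq', Finset.mem_univ, if_true]
  simp only [Finset.sum_mul]
  rw [Finset.sum_comm]

lemma mul_conj_apply (V : Matrix γ β ℂ) (M : Matrix β β ℂ) (x y : γ) :
    (V * M * Vᴴ) x y = ∑ s, ∑ t, V x s * M s t * star (V y t) := by
  simp only [Matrix.mul_apply, Matrix.conjTranspose_apply, Finset.sum_mul]
  rw [Finset.sum_comm]

lemma ptraceLeft_kron_conj (V : Matrix γ β ℂ) (σ : Matrix (α × β) (α × β) ℂ) :
    ptraceLeft (((1 : Matrix α α ℂ) ⊗ₖ V) * σ * ((1 : Matrix α α ℂ) ⊗ₖ V)ᴴ) =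
      V * ptraceLeft σ * Vᴴ := by
  ext x y
  simp only [ptraceLeft, kron_conj_apply]
  rw [mul_conj_apply]
  calc ∑ k : α, ∑ s : β, ∑ t : β, V x s * σ (k, s) (k, t) * star (V y t)
      = ∑ s : β, ∑ k : α, ∑ t : β, V x s * σ (k, s) (k, t) * star (V y t) :=
        Finset.sum_comm
    _ = ∑ s : β, ∑ t : β, ∑ k : α, V x s * σ (k, s) (k, t) * star (V y t) :=
        Finset.sum_congr rfl fun s _ => Finset.sum_comm
    _ = ∑ s : β, ∑ t : β, V x s * (∑ k : α, σ (k, s) (k, t)) * star (V y t) := by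
        refine Finset.sum_congr rfl fun s _ => Finset.sum_congr rfl fun t _ => ?_
        rw [Finset.mul_sum, Finset.sum_mul]

lemma ptraceRight_kron_conj (V : Matrix γ β ℂ) (hV : Vᴴ * V = 1)
    (σ : Matrix (α × β) (α × β) ℂ) :
    ptraceRight (((1 : Matrix α α ℂ) ⊗ₖ V) * σ * ((1 : Matrix α α ℂ) ⊗ₖ V)ᴴ) =
      ptraceRight σ := by
  ext i j
  simp only [ptraceRight, kron_conj_apply]
  have key : ∀ s t : β, ∑ x : γ, V x s * σ (i, s) (j, t) * star (V x t) =
      σ (i, s) (j, t) * (Vᴴ * V) t s := by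
    intro s t
    rw [Matrix.mul_apply, Finset.mul_sum]
    refine Finset.sum_congr rfl fun x _ => ?_
    simp only [Matrix.conjTranspose_apply]
    ring
  rw [Finset.sum_comm]
  calc ∑ s, ∑ x, ∑ t, V x s * σ (i, s) (j, t) * star (V x t)
      = ∑ s, ∑ t, σ (i, s) (j, t) * (Vᴴ * V) t s := by
        refine Finset.sum_congr rfl fun s _ => ?_
        rw [Finset.sum_comm]
        exact Finset.sum_congr rfl fun t _ => key s t
    _ = ∑ s, σ (i, s) (j, s) := by
        refine Finset.sum_congr rfl fun s _ => ?_
        rw [hV]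
        simp [Matrix.one_apply]

lemma ptraceLeft_reindex_kron {L R : Type*} [Fintype L] [DecidableEq L] [Fintype R]
    [DecidableEq R] (P : Matrix (α × L) (α × L) ℂ) (Q : Matrix R R ℂ) :
    ptraceLeft (Matrix.reindex (Equiv.prodAssoc α L R) (Equiv.prodAssoc α L R) (P ⊗ₖ Q)) =
      ptraceLeft P ⊗ₖ Q := by
  ext ⟨l, r⟩ ⟨l', r'⟩
  simp only [ptraceLeft, Matrix.kroneckerMap_apply]
  rw [Finset.sum_mul]
  refine Finset.sum_congr rfl fun k _ => ?_
  simp [Matrix.reindex_apply, Matrix.submatrix_apply, Equiv.prodAssoc,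
    Matrix.kroneckerMap_apply]

lemma ptraceRight_reindex_kron {L R : Type*} [Fintype L] [DecidableEq L] [Fintype R]
    [DecidableEq R] (P : Matrix (α × L) (α × L) ℂ) (Q : Matrix R R ℂ) (hQ : Q.trace = 1) :
    ptraceRight (Matrix.reindex (Equiv.prodAssoc α L R) (Equiv.prodAssoc α L R) (P ⊗ₖ Q)) =
      ptraceRight P := by
  ext k k'
  simp only [ptraceRight]
  rw [Fintype.sum_prod_type]
  have : ∀ l : L, ∑ r : R, (Matrix.reindex (Equiv.prodAssoc α L R) (Equiv.prodAssoc α L R)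
      (P ⊗ₖ Q)) (k, l, r) (k', l, r) = P (k, l) (k', l) * Q.trace := by
    intro l
    rw [Matrix.trace, Finset.mul_sum]
    refine Finset.sum_congr rfl fun r _ => ?_
    simp [Matrix.reindex_apply, Matrix.submatrix_apply, Equiv.prodAssoc,
      Matrix.kroneckerMap_apply, Matrix.diag]
  simp only [this, hQ, mul_one]

end StructAux2

section FinalAux

lemma reindex_isHermitian {p q : Type*} (e : p ≃ q) (A : Matrix p p ℂ) (hA : A.IsHermitian) :
    (Matrix.reindex e e A).IsHermitian := by
  show (Matrix.reindex e e A)ᴴ = Matrix.reindex e e A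
  ext i j
  simp [Matrix.conjTranspose_apply, hA.apply]

lemma proj_eq_col_mul {n : Type*} (v : n → ℂ) :
    proj v = Matrix.replicateCol Unit v * (Matrix.replicateCol Unit v)ᴴ := by
  rw [Matrix.conjTranspose_replicateCol, proj, Matrix.vecMulVec_eq Unit]

lemma proj_posSemidef {n : Type*} [Fintype n] (v : n → ℂ) : (proj v).PosSemidef := by
  rw [proj_eq_col_mul]
  exact Matrix.posSemidef_self_mul_conjTranspose _

end FinalAux

/-- if `(1_A ⊗ Φ)(|u_ρ⟩⟨u_ρ|)` is a pure state on `A ⊗ L` tensored with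
a density matrix on `R`, then the coherent information attains its maximum `S(ρ)`. -/
theorem coherent_information_max_of_output_product {a b : Type*}
    [Fintype a] [Fintype b] [DecidableEq a] [DecidableEq b]
    (Φ : QChannel b b) (ρ : Matrix b b ℂ) (hρ : IsDensity ρ)
    (u : a × b → ℂ) (hu : ptraceLeft (proj u) = ρ)
    (dL dR : ℕ) (V : Matrix (Fin dL × Fin dR) b ℂ)
    (hV₁ : V * Vᴴ = 1) (hV₂ : Vᴴ * V = 1)
    (φ : a × Fin dL → ℂ) (hφ : IsUnit' φ)
    (ρR : Matrix (Fin dR) (Fin dR) ℂ) (hρR : IsDensity ρR)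
    (hform : ((1 : Matrix a a ℂ) ⊗ₖ V) * idTensor Φ.map (proj u) *
        ((1 : Matrix a a ℂ) ⊗ₖ V)ᴴ =
      Matrix.reindex (Equiv.prodAssoc a (Fin dL) (Fin dR))
        (Equiv.prodAssoc a (Fin dL) (Fin dR)) (proj φ ⊗ₖ ρR)) :
    vNEntropy (Φ.map ρ) - vNEntropy (idTensor Φ.map (proj u)) = vNEntropy ρ := by
  set σ := idTensor Φ.map (proj u) with hσdef
  set W := ((1 : Matrix a a ℂ) ⊗ₖ V) with hWdef
  set e := Equiv.prodAssoc a (Fin dL) (Fin dR) with hedef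
  set K := proj φ ⊗ₖ ρR with hKdef
  -- basic facts about W
  have hWH : Wᴴ = (1 : Matrix a a ℂ) ⊗ₖ Vᴴ := by
    rw [hWdef, conjTranspose_kron, Matrix.conjTranspose_one]
  have hWW : W * Wᴴ = 1 := by
    rw [hWH, hWdef, ← Matrix.mul_kronecker_mul, Matrix.mul_one, hV₁, Matrix.one_kronecker_one]
  have hW'W : Wᴴ * W = 1 := by
    rw [hWH, hWdef, ← Matrix.mul_kronecker_mul, Matrix.mul_one, hV₂, Matrix.one_kronecker_one]
  -- Hermitian facts
  have hprojφ : (proj φ).PosSemidef := proj_posSemidef φ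
  have htrprojφ : (proj φ).trace = 1 := trace_proj φ hφ
  have hK_herm : K.IsHermitian := kron_isHermitian hprojφ.1 hρR.1.1
  have hσ' : σ = Wᴴ * (Matrix.reindex e e K) * W := by
    rw [← hform]
    rw [Matrix.mul_assoc W σ Wᴴ, ← Matrix.mul_assoc Wᴴ W (σ * Wᴴ), hW'W, Matrix.one_mul,
      Matrix.mul_assoc σ Wᴴ W, hW'W, Matrix.mul_one]
  -- entropy of σ
  have hSσ : vNEntropy σ = vNEntropy ρR := by
    rw [hσ']
    have h1 : vNEntropy (Wᴴ * (Matrix.reindex e e K) * W) = vNEntropy (Matrix.reindex e e K) := by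
      have := vNEntropy_conj Wᴴ (Matrix.reindex e e K)
        (by rw [Matrix.conjTranspose_conjTranspose, hWW]) (reindex_isHermitian e K hK_herm)
      rwa [Matrix.conjTranspose_conjTranspose] at this
    rw [h1, vNEntropy_reindex e K hK_herm, hKdef,
      vNEntropy_kron _ _ hprojφ hρR.1 htrprojφ hρR.2, vNEntropy_proj φ hφ, zero_add]
  -- the output state
  set τL := ptraceLeft (proj φ) with hτdef
  have hτpsd : τL.PosSemidef := ptraceLeft_proj_posSemidef φ
  have hτtr : τL.trace = 1 := by rw [hτdef, trace_ptraceLeft, htrprojφ]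
  have hΦρ : Φ.map ρ = ptraceLeft σ := by
    rw [hσdef, ptraceLeft_idTensor, hu]
  have hVΦρ : V * Φ.map ρ * Vᴴ = τL ⊗ₖ ρR := by
    rw [hΦρ, ← ptraceLeft_kron_conj V σ, ← hWdef, hform, hKdef, hedef,
      ptraceLeft_reindex_kron, hτdef]
  have hΦρ' : Φ.map ρ = Vᴴ * (τL ⊗ₖ ρR) * V := by
    rw [← hVΦρ]
    rw [Matrix.mul_assoc V (Φ.map ρ) Vᴴ, ← Matrix.mul_assoc Vᴴ V (Φ.map ρ * Vᴴ), hV₂,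
      Matrix.one_mul, Matrix.mul_assoc (Φ.map ρ) Vᴴ V, hV₂, Matrix.mul_one]
  have hτR_herm : (τL ⊗ₖ ρR).IsHermitian := kron_isHermitian hτpsd.1 hρR.1.1
  have hSΦρ : vNEntropy (Φ.map ρ) = vNEntropy τL + vNEntropy ρR := by
    rw [hΦρ']
    have h1 := vNEntropy_conj Vᴴ (τL ⊗ₖ ρR)
      (by rw [Matrix.conjTranspose_conjTranspose, hV₁]) hτR_herm
    rw [Matrix.conjTranspose_conjTranspose] at h1
    rw [h1, vNEntropy_kron _ _ hτpsd hρR.1 hτtr hρR.2]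
  -- entropy of the input
  have hmarg : ptraceRight (proj u) = ptraceRight (proj φ) := by
    have h1 : ptraceRight σ = ptraceRight (proj u) := ptraceRight_idTensor Φ (proj u)
    have h2 : ptraceRight (W * σ * Wᴴ) = ptraceRight σ := by
      rw [hWdef]
      exact ptraceRight_kron_conj V hV₂ σ
    rw [← h1, ← h2, hform, hKdef, hedef, ptraceRight_reindex_kron _ _ hρR.2]
  have hSρ : vNEntropy ρ = vNEntropy τL := by
    rw [← hu, vNEntropy_marginals u, hmarg, ← vNEntropy_marginals φ, hτdef]
  rw [hSσ, hSΦρ, hSρ]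
  ring

end EntAux
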